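/- Let (β_n)_{n≥0} be a sequence of independent (not necessarily identically distributed) 𝔻-valued random variables on a probability space (Ω, ℙ). For ω ∈ Ω let f_ω be the Schur function with parameter sequence (β_n(ω))_{n≥0} and Σ_ac(ω) = {e^{iθ} ∈ ∂𝔻 : the radial limit lim_{r↑1} f_ω(re^{iθ}) exists and has modulus < 1}. Then there exists a Borel set A ⊆ ∂𝔻 such that for ℙ-a.e. ω, the symmetric difference Σ_ac(ω) Δ A has Lebesgue measure zero; i.e., the essential support of the absolutely continuous spectrum of the random CMV matrix is deterministic almost surely. -/

import Mathlib

open MeasureTheory Filter Metric Complex Set Topology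

noncomputable section

/-- A Schur function: analytic on the open unit disc with modulus bounded by one. -/
def IsSchur (f : ℂ → ℂ) : Prop :=
  DifferentiableOn ℂ f (ball (0:ℂ) 1) ∧ ∀ z ∈ ball (0:ℂ) 1, ‖f z‖ ≤ 1

/-- `f` is the Schur function whose Schur parameter sequence is `α`; the Schur
algorithm recursion is imposed at every step whose parameter has modulus `< 1`
(at a parameter of modulus one the algorithm terminates, and indeed the condition
`g n 0 = α n` with `g n` Schur then forces `g n` to be the constant `α n`). -/
def HasSchurParams (f : ℂ → ℂ) (α : ℕ → ℂ) : Prop :=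
  ∃ g : ℕ → ℂ → ℂ, g 0 = f ∧ (∀ n, IsSchur (g n)) ∧ (∀ n, g n 0 = α n) ∧
    ∀ n, ‖α n‖ < 1 → ∀ z ∈ ball (0:ℂ) 1,
      z * g (n+1) z * (1 - (starRingEnd ℂ) (α n) * g n z) = g n z - α n

/-- The radial limit of `f` at the boundary point `z` equals `L`. -/
def RadialLimit (f : ℂ → ℂ) (z L : ℂ) : Prop :=
  Tendsto (fun r : ℝ => f ((r : ℂ) * z)) (nhdsWithin 1 (Set.Iio 1)) (𝓝 L)

/-- The set of angles `θ ∈ [0, 2π)` whose corresponding point `e^{iθ}` lies in `S ⊆ ∂𝔻`. -/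
def circleSet (S : Set ℂ) : Set ℝ :=
  {θ : ℝ | θ ∈ Set.Ico 0 (2 * Real.pi) ∧ Complex.exp (θ * Complex.I) ∈ S}

/-- Harmonic measure `ω_z(S)` of a Borel set `S ⊆ ∂𝔻` at `z ∈ 𝔻`. -/
def omega (z : ℂ) (S : Set ℂ) : ℝ :=
  ∫ θ in circleSet S,
    ((Complex.exp (θ * Complex.I) + z) / (Complex.exp (θ * Complex.I) - z)).re / (2 * Real.pi)

/-- The radial boundary value `ω_{f(e^{iθ})}(S) = lim_{r↑1} ω_{f(re^{iθ})}(S)`. -/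
def omegaBdry (f : ℂ → ℂ) (S : Set ℂ) (θ : ℝ) : ℝ :=
  limUnder (nhdsWithin (1:ℝ) (Set.Iio 1))
    (fun r : ℝ => omega (f ((r:ℂ) * Complex.exp (θ * Complex.I))) S)

/-- The reversed (Szegő) polynomial `P*(z) = z^n conj(P(1/conj z))` of a degree-`n` polynomial. -/
def szegoRev (n : ℕ) (P : Polynomial ℂ) : Polynomial ℂ :=
  (P.map (starRingEnd ℂ)).reflect n

/-- `α` is the Verblunsky coefficient sequence of the measure `μ` on the unit circle
(parametrized by `θ ∈ [0,2π)`): `Φ` are the monic orthogonal polynomials obtained by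
Gram–Schmidt from `1, z, z², …` in `L²(∂𝔻, dμ)` and the Szegő recursion
`Φ_{n+1}(z) = z Φ_n(z) - conj(α_n) Φ_n*(z)` holds. -/
def IsVerblunsky (μ : Measure ℝ) (Φ : ℕ → Polynomial ℂ) (α : ℕ → ℂ) : Prop :=
  (∀ n, (Φ n).Monic) ∧ (∀ n, (Φ n).natDegree = n) ∧
  (∀ n m : ℕ, m < n →
    ∫ θ, (Φ n).eval (Complex.exp (θ * Complex.I)) *
      (starRingEnd ℂ) (Complex.exp (θ * Complex.I)) ^ m ∂μ = 0) ∧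
  (∀ n, ‖α n‖ < 1) ∧
  (∀ n, Φ (n + 1) =
    Polynomial.X * Φ n - Polynomial.C ((starRingEnd ℂ) (α n)) * szegoRev n (Φ n))

/-- `β : ℤ → ℂ` is a right limit of the half-line sequence `α`. -/
def IsRightLimit (α : ℕ → ℂ) (β : ℤ → ℂ) : Prop :=
  ∃ nj : ℕ → ℕ, Tendsto nj atTop atTop ∧
    ∀ n : ℤ, Tendsto (fun j => α (n + nj j).toNat) atTop (𝓝 (β n))

/-- The `L²(μ)` norm of the boundary values of the polynomial `P`. -/
def opucNorm (μ : Measure ℝ) (P : Polynomial ℂ) : ℝ :=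
  Real.sqrt (∫ θ, ‖P.eval (Complex.exp (θ * Complex.I))‖ ^ 2 ∂μ)

/-- The measure `|φ|² dμ`, where `φ = P / ‖P‖_{L²(μ)}` is the normalized polynomial. -/
def diagMeasure (μ : Measure ℝ) (P : Polynomial ℂ) : Measure ℝ :=
  μ.withDensity (fun θ => ENNReal.ofReal
    (‖P.eval (Complex.exp (θ * Complex.I)) / ((opucNorm μ P : ℝ) : ℂ)‖ ^ 2))



/-- The Möbius map of the Schur algorithm. -/
def moeb (a u : ℂ) : ℂ := (a + u) / (1 + (starRingEnd ℂ) a * u)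

lemma moeb_normSq (a u : ℂ) :
    Complex.normSq (1 + (starRingEnd ℂ) a * u) - Complex.normSq (a + u)
      = (1 - Complex.normSq a) * (1 - Complex.normSq u) := by
  have key : ((1 + (starRingEnd ℂ) a * u) * (starRingEnd ℂ) (1 + (starRingEnd ℂ) a * u))
      - ((a + u) * (starRingEnd ℂ) (a + u))
      = ((1 : ℂ) - a * (starRingEnd ℂ) a) * (1 - u * (starRingEnd ℂ) u) := by
    simp only [map_add, map_mul, map_one, Complex.conj_conj]
    ring
  rw [Complex.mul_conj, Complex.mul_conj, Complex.mul_conj, Complex.mul_conj] at key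
  have := congrArg Complex.re key
  simpa using this

lemma normSq_le_one_of_abs_le_one {a : ℂ} (h : ‖a‖ ≤ 1) : Complex.normSq a ≤ 1 := by
  nlinarith [Complex.sq_norm a, norm_nonneg a]

lemma moeb_denom_pos {a u : ℂ} (h : ‖a‖ * ‖u‖ < 1) :
    0 < ‖1 + (starRingEnd ℂ) a * u‖ := by
  have h1 : ‖(starRingEnd ℂ) a * u‖ < 1 := by
    rwa [norm_mul, Complex.norm_conj]
  have h2 : ‖(1:ℂ)‖ - ‖-((starRingEnd ℂ) a * u)‖ ≤ ‖(1:ℂ) - -((starRingEnd ℂ) a * u)‖ :=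
    norm_sub_norm_le _ _
  simp only [norm_one, norm_neg, sub_neg_eq_add] at h2
  have : ‖(starRingEnd ℂ) a * u‖ = ‖(starRingEnd ℂ) a * u‖ := rfl
  calc (0:ℝ) < 1 - ‖(starRingEnd ℂ) a * u‖ := by rw [← this]; linarith
  _ ≤ ‖(1:ℂ) + (starRingEnd ℂ) a * u‖ := h2
  _ = ‖1 + (starRingEnd ℂ) a * u‖ := rfl

lemma moeb_denom_ne {a u : ℂ} (h : ‖a‖ * ‖u‖ < 1) :
    (1 + (starRingEnd ℂ) a * u) ≠ 0 := by
  intro h0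
  have := moeb_denom_pos h
  rw [h0] at this
  simp at this

lemma abs_le_abs_of_normSq_le {x y : ℂ} (h : Complex.normSq x ≤ Complex.normSq y) :
    ‖x‖ ≤ ‖y‖ := by
  rw [Complex.norm_def, Complex.norm_def]
  exact Real.sqrt_le_sqrt h

lemma moeb_num_le_denom {a u : ℂ} (ha : ‖a‖ ≤ 1) (hu : ‖u‖ ≤ 1) :
    ‖a + u‖ ≤ ‖1 + (starRingEnd ℂ) a * u‖ := by
  apply abs_le_abs_of_normSq_le
  have h1 := moeb_normSq a u
  have h2 := normSq_le_one_of_abs_le_one ha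
  have h3 := normSq_le_one_of_abs_le_one hu
  nlinarith

lemma moeb_num_lt_denom {a u : ℂ} (ha : ‖a‖ < 1) (hu : ‖u‖ < 1) :
    ‖a + u‖ < ‖1 + (starRingEnd ℂ) a * u‖ := by
  have h1 := moeb_normSq a u
  have h2 : Complex.normSq a < 1 := by nlinarith [Complex.sq_norm a, norm_nonneg a]
  have h3 : Complex.normSq u < 1 := by nlinarith [Complex.sq_norm u, norm_nonneg u]
  have h4 : Complex.normSq (a + u) < Complex.normSq (1 + (starRingEnd ℂ) a * u) := by nlinarith
  rw [Complex.norm_def, Complex.norm_def]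
  exact Real.sqrt_lt_sqrt (Complex.normSq_nonneg _) h4

lemma moeb_abs_le_one {a u : ℂ} (ha : ‖a‖ ≤ 1) (hu : ‖u‖ ≤ 1)
    (h : ‖a‖ * ‖u‖ < 1) : ‖moeb a u‖ ≤ 1 := by
  rw [moeb, norm_div, div_le_one (moeb_denom_pos h)]
  exact moeb_num_le_denom ha hu

lemma moeb_abs_lt_one {a u : ℂ} (ha : ‖a‖ < 1) (hu : ‖u‖ < 1) :
    ‖moeb a u‖ < 1 := by
  have h : ‖a‖ * ‖u‖ < 1 := by
    nlinarith [norm_nonneg a, norm_nonneg u]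
  rw [moeb, norm_div, div_lt_one (moeb_denom_pos h)]
  exact moeb_num_lt_denom ha hu

/-- Lipschitz estimate for the Möbius map on the half disc. -/
lemma moeb_lipschitz {a u u' : ℂ} (ha : ‖a‖ < 1)
    (hu : ‖u‖ ≤ 1/2) (hu' : ‖u'‖ ≤ 1/2) :
    ‖moeb a u - moeb a u'‖ ≤ 4/3 * ‖u - u'‖ := by
  have hau : ‖a‖ * ‖u‖ < 1 := by
    nlinarith [norm_nonneg a, norm_nonneg u]
  have hau' : ‖a‖ * ‖u'‖ < 1 := by
    nlinarith [norm_nonneg a, norm_nonneg u']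
  have hd := moeb_denom_ne hau
  have hd' := moeb_denom_ne hau'
  have key : moeb a u - moeb a u'
      = (u - u') * (1 - a * (starRingEnd ℂ) a)
        / ((1 + (starRingEnd ℂ) a * u) * (1 + (starRingEnd ℂ) a * u')) := by
    rw [moeb, moeb, div_sub_div _ _ hd hd']
    congr 1
    ring
  rw [key, norm_div, norm_mul, norm_mul]
  have h1 : (1 : ℂ) - a * (starRingEnd ℂ) a = ((1 - Complex.normSq a : ℝ) : ℂ) := by
    rw [Complex.mul_conj]; push_cast; ring
  have hna : Complex.normSq a < 1 := by nlinarith [Complex.sq_norm a, norm_nonneg a]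
  have h2 : ‖1 - a * (starRingEnd ℂ) a‖ = 1 - Complex.normSq a := by
    rw [h1, Complex.norm_real, Real.norm_eq_abs, _root_.abs_of_nonneg (by linarith : (0:ℝ) ≤ 1 - Complex.normSq a)]
  -- lower bounds on denominators
  have hb : ∀ v : ℂ, ‖v‖ ≤ 1/2 →
      1 - ‖a‖ / 2 ≤ ‖1 + (starRingEnd ℂ) a * v‖ := by
    intro v hv
    have h2' : ‖(1:ℂ)‖ - ‖-((starRingEnd ℂ) a * v)‖ ≤ ‖(1:ℂ) - -((starRingEnd ℂ) a * v)‖ :=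
      norm_sub_norm_le _ _
    simp only [norm_one, norm_neg, sub_neg_eq_add] at h2'
    have h3' : ‖(starRingEnd ℂ) a * v‖ = ‖a‖ * ‖v‖ := by
      rw [norm_mul]
      congr 1
      exact RCLike.norm_conj a
    have : ‖a‖ * ‖v‖ ≤ ‖a‖ / 2 := by
      nlinarith [norm_nonneg a]
    calc 1 - ‖a‖ / 2 ≤ 1 - ‖a‖ * ‖v‖ := by linarith
    _ = 1 - ‖(starRingEnd ℂ) a * v‖ := by rw [h3']
    _ ≤ ‖1 + (starRingEnd ℂ) a * v‖ := h2'
  have hbu := hb u hu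
  have hbu' := hb u' hu'
  have hpos : (0:ℝ) < 1 - ‖a‖ / 2 := by linarith
  rw [h2]
  have hdpos : (0:ℝ) < ‖1 + (starRingEnd ℂ) a * u‖ * ‖1 + (starRingEnd ℂ) a * u'‖ :=
    mul_pos (moeb_denom_pos hau) (moeb_denom_pos hau')
  rw [div_le_iff₀ hdpos]
  have habs : (0:ℝ) ≤ ‖u - u'‖ := norm_nonneg _
  have hkey : (1 - Complex.normSq a) ≤ 4/3 * ((1 - ‖a‖ / 2) * (1 - ‖a‖ / 2)) := by
    have := Complex.sq_norm a
    nlinarith [norm_nonneg a, sq_nonneg (1 - 2 * ‖a‖)]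
  calc ‖u - u'‖ * (1 - Complex.normSq a)
      ≤ ‖u - u'‖ * (4/3 * ((1 - ‖a‖ / 2) * (1 - ‖a‖ / 2))) := by
        exact mul_le_mul_of_nonneg_left hkey habs
  _ ≤ 4/3 * ‖u - u'‖ *
        (‖1 + (starRingEnd ℂ) a * u‖ * ‖1 + (starRingEnd ℂ) a * u'‖) := by
        have := mul_le_mul hbu hbu' (by linarith) (norm_nonneg _)
        nlinarith [norm_nonneg (u - u')]
/-- Truncated Schur continued-fraction approximant. -/
def schurApprox : ℕ → (ℕ → ℂ) → ℂ → ℂ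
  | 0, _, _ => 0
  | (n+1), a, z => moeb (a 0) (z * schurApprox n (fun k => a (k+1)) z)

def IsSchur' (f : ℂ → ℂ) : Prop :=
  DifferentiableOn ℂ f (ball (0:ℂ) 1) ∧ ∀ z ∈ ball (0:ℂ) 1, ‖f z‖ ≤ 1

/-- A Schur-algorithm tower with parameters `a`. -/
def IsTower (g : ℕ → ℂ → ℂ) (a : ℕ → ℂ) : Prop :=
  (∀ n, IsSchur' (g n)) ∧ (∀ n, ‖a n‖ < 1) ∧
    (∀ n, ∀ z ∈ ball (0:ℂ) 1,
      z * g (n+1) z * (1 - (starRingEnd ℂ) (a n) * g n z) = g n z - a n)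

lemma IsTower.shift {g : ℕ → ℂ → ℂ} {a : ℕ → ℂ} (h : IsTower g a) (m : ℕ) :
    IsTower (fun n => g (n + m)) (fun n => a (n + m)) :=
  ⟨fun n => h.1 (n + m), fun n => h.2.1 (n + m), fun n z hz => by
    have := h.2.2 (n + m) z hz
    simpa [Nat.add_right_comm n 1 m] using this⟩

lemma IsTower.moeb_eq {g : ℕ → ℂ → ℂ} {a : ℕ → ℂ} (h : IsTower g a) (n : ℕ)
    {z : ℂ} (hz : z ∈ ball (0:ℂ) 1) :
    g n z = moeb (a n) (z * g (n+1) z) := by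
  have hrec := h.2.2 n z hz
  have hb : ‖z * g (n+1) z‖ ≤ ‖z‖ := by
    rw [norm_mul]
    calc ‖z‖ * ‖g (n+1) z‖ ≤ ‖z‖ * 1 :=
      mul_le_mul_of_nonneg_left ((h.1 (n+1)).2 z hz) (norm_nonneg z)
    _ = ‖z‖ := mul_one _
  have hz1 : ‖z‖ < 1 := by simpa [Complex.dist_eq] using hz
  have hlt : ‖a n‖ * ‖z * g (n+1) z‖ < 1 := by
    have h1 := h.2.1 n
    have h0 := norm_nonneg (a n)
    have h0' := norm_nonneg (z * g (n+1) z)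
    nlinarith
  have hne := moeb_denom_ne hlt
  rw [moeb, eq_div_iff hne]
  have : g n z * (1 + (starRingEnd ℂ) (a n) * (z * g (n+1) z))
      = (g n z - a n) - z * g (n+1) z * (1 - (starRingEnd ℂ) (a n) * g n z)
        + (a n + z * g (n+1) z) := by ring
  rw [this, hrec]
  ring

lemma schurApprox_abs_le {a : ℕ → ℂ} (ha : ∀ k, ‖a k‖ < 1) {z : ℂ}
    (hz : ‖z‖ ≤ 1/2) : ∀ n, ‖schurApprox n a z‖ ≤ 1 := by
  intro n
  induction n generalizing a with
  | zero => simp [schurApprox]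
  | succ n ih =>
    rw [schurApprox]
    have hih := ih (a := fun k => a (k+1)) (fun k => ha (k+1))
    have hu : ‖z * schurApprox n (fun k => a (k+1)) z‖ ≤ 1/2 := by
      rw [norm_mul]
      calc ‖z‖ * ‖schurApprox n (fun k => a (k+1)) z‖
          ≤ (1/2) * 1 := by
            apply mul_le_mul hz hih (norm_nonneg _) (by norm_num)
      _ = 1/2 := by norm_num
    apply moeb_abs_le_one (ha 0).le (le_trans hu (by norm_num))
    have := norm_nonneg (z * schurApprox n (fun k => a (k+1)) z)
    nlinarith [ha 0, norm_nonneg (a 0)]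

/-- Key approximation estimate: the truncated continued fraction approximates
any Schur tower geometrically fast on the half-disc. -/
lemma tower_approx {g : ℕ → ℂ → ℂ} {a : ℕ → ℂ} (h : IsTower g a) {z : ℂ}
    (hz : ‖z‖ ≤ 1/2) :
    ∀ n, ‖g 0 z - schurApprox n a z‖ ≤ 2 * (2/3) ^ n := by
  intro n
  induction n generalizing g a with
  | zero =>
    have hz1 : z ∈ ball (0:ℂ) 1 := by
      simp only [mem_ball, Complex.dist_eq, sub_zero]; linarith
    have h1 := (h.1 0).2 z hz1
    simp only [schurApprox, sub_zero, pow_zero, mul_one]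
    linarith
  | succ n ih =>
    have hz1 : z ∈ ball (0:ℂ) 1 := by
      simp only [mem_ball, Complex.dist_eq, sub_zero]; linarith
    have hg0 : g 0 z = moeb (a 0) (z * g 1 z) := h.moeb_eq 0 hz1
    have hsh : IsTower (fun n => g (n + 1)) (fun n => a (n + 1)) := h.shift 1
    have hih := ih hsh
    rw [hg0, schurApprox]
    have hu : ‖z * g 1 z‖ ≤ 1/2 := by
      rw [norm_mul]
      calc ‖z‖ * ‖g 1 z‖ ≤ (1/2) * 1 :=
        mul_le_mul hz ((h.1 1).2 z hz1) (norm_nonneg _) (by norm_num)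
      _ = 1/2 := by norm_num
    have hu' : ‖z * schurApprox n (fun k => a (k+1)) z‖ ≤ 1/2 := by
      rw [norm_mul]
      have hb := schurApprox_abs_le (fun k => h.2.1 (k+1)) hz n
      calc ‖z‖ * ‖schurApprox n (fun k => a (k+1)) z‖
          ≤ (1/2) * 1 :=
        mul_le_mul hz hb (norm_nonneg _) (by norm_num)
      _ = 1/2 := by norm_num
    calc ‖moeb (a 0) (z * g 1 z) - moeb (a 0) (z * schurApprox n (fun k => a (k+1)) z)‖
        ≤ 4/3 * ‖z * g 1 z - z * schurApprox n (fun k => a (k+1)) z‖ :=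
          moeb_lipschitz (h.2.1 0) hu hu'
    _ = 4/3 * (‖z‖ * ‖g 1 z - schurApprox n (fun k => a (k+1)) z‖) := by
          rw [← norm_mul, mul_sub]
    _ ≤ 4/3 * ((1/2) * (2 * (2/3)^n)) := by
          have hih' : ‖g 1 z - schurApprox n (fun k => a (k+1)) z‖ ≤ 2 * (2/3)^n := by
            simpa using hih
          have := mul_le_mul hz hih' (norm_nonneg _) (by norm_num : (0:ℝ) ≤ 1/2)
          nlinarith [norm_nonneg (g 1 z - schurApprox n (fun k => a (k+1)) z)]
    _ = 2 * (2/3)^(n+1) := by ring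
open scoped NNReal ENNReal

/-- Power-series representation of a function analytic on the unit ball,
with coefficients computed on the circle of radius `1/2`. -/
lemma schur_hasSum {g : ℂ → ℂ} (hd : DifferentiableOn ℂ g (ball (0:ℂ) 1)) {z : ℂ}
    (hz : z ∈ ball (0:ℂ) 1) :
    HasSum (fun n => z ^ n • (cauchyPowerSeries g 0 ((1/2 : ℝ≥0) : ℝ) n fun _ => (1:ℂ))) (g z) := by
  have hz' : ‖z‖ < 1 := by simpa [Complex.dist_eq] using hz
  set r : ℝ≥0 := ⟨(1 + ‖z‖)/2, by positivity⟩ with hr_def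
  have hrR : (r : ℝ) = (1 + ‖z‖)/2 := rfl
  have hr1 : (r : ℝ) < 1 := by rw [hrR]; linarith
  have hzr : ‖z‖ < (r : ℝ) := by rw [hrR]; linarith [norm_nonneg z]
  have hr0 : 0 < r := by
    rw [← NNReal.coe_lt_coe, hrR]
    simp only [NNReal.coe_zero]
    linarith [norm_nonneg z]
  have hsub : closedBall (0:ℂ) r ⊆ ball (0:ℂ) 1 := by
    intro w hw
    simp only [mem_closedBall, mem_ball, Complex.dist_eq, sub_zero] at *
    linarith
  have hsub2 : closedBall (0:ℂ) ((1/2 : ℝ≥0) : ℝ) ⊆ ball (0:ℂ) 1 := by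
    intro w hw
    simp only [mem_closedBall, mem_ball, Complex.dist_eq, sub_zero] at *
    have : ((1/2 : ℝ≥0) : ℝ) = 1/2 := by norm_num
    rw [this] at hw; linarith
  have h1 : HasFPowerSeriesOnBall g (cauchyPowerSeries g 0 r) 0 r :=
    (hd.mono hsub).hasFPowerSeriesOnBall hr0
  have h2 : HasFPowerSeriesOnBall g (cauchyPowerSeries g 0 ((1/2 : ℝ≥0) : ℝ)) 0 (1/2 : ℝ≥0) :=
    (hd.mono hsub2).hasFPowerSeriesOnBall (by norm_num)
  have hq : cauchyPowerSeries g 0 ((1/2 : ℝ≥0) : ℝ) = cauchyPowerSeries g 0 (r : ℝ) :=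
    h2.hasFPowerSeriesAt.eq_formalMultilinearSeries h1.hasFPowerSeriesAt
  have hmem : z ∈ Metric.eball (0:ℂ) r := by
    rw [Metric.mem_eball, edist_zero_right, enorm_eq_nnnorm, ← ENNReal.coe_lt_coe.symm]
    · exact_mod_cast (by rw [coe_nnnorm]; exact hzr :
        (‖z‖₊ : ℝ) < (r : ℝ))
  have hsum := h1.hasSum hmem
  rw [zero_add] at hsum
  convert hsum using 2 with n
  · rfl
  rw [hq]
  have := (cauchyPowerSeries g 0 (r:ℝ) n).map_smul_univ (fun _ : Fin n => z) (fun _ => 1)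
  simpa using this.symm

/-- The `n`-th Taylor coefficient, computed by a Cauchy integral over the circle
of radius `1/2`. -/
def coef (g : ℂ → ℂ) (n : ℕ) : ℂ :=
  cauchyPowerSeries g 0 ((1/2 : ℝ≥0) : ℝ) n (fun _ => 1)

section Meas

variable {X : Type} [mX : MeasurableSpace X]

lemma measurable_conj' : Measurable (fun z : ℂ => (starRingEnd ℂ) z) :=
  Complex.continuous_conj.measurable

lemma measurable_moeb {a u : X → ℂ} (ha : Measurable a) (hu : Measurable u) :
    Measurable (fun x => moeb (a x) (u x)) := by
  simp only [moeb, div_eq_mul_inv]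
  exact ((ha.add hu).mul (((measurable_conj'.comp ha).mul hu).const_add 1).inv)

lemma measurable_schurApprox (j : ℕ) :
    ∀ (b : ℕ → X → ℂ), (∀ k, Measurable (b k)) → ∀ (ζ : X → ℂ), Measurable ζ →
    Measurable (fun x => schurApprox j (fun k => b k x) (ζ x)) := by
  induction j with
  | zero => intro b hb ζ hζ; simp only [schurApprox]; exact measurable_const
  | succ j ih =>
    intro b hb ζ hζ
    simp only [schurApprox]
    exact measurable_moeb (hb 0)
      (hζ.mul (ih (fun k => b (k+1)) (fun k => hb (k+1)) ζ hζ))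

variable {G : X → ℂ → ℂ} {b : ℕ → X → ℂ}

/-- Joint measurability of the values of a measurably-parametrized Schur function
on the circle of radius 1/2. -/
lemma measurable_circle_values (hb : ∀ k, Measurable (b k))
    (hG : ∀ x, ∃ g : ℕ → ℂ → ℂ, g 0 = G x ∧ IsTower g (fun k => b k x)) :
    Measurable (fun p : X × ℝ => G p.1 (circleMap 0 (1/2) p.2)) := by
  apply measurable_of_tendsto_metrizable
    (f := fun j (p : X × ℝ) => schurApprox j (fun k => b k p.1) (circleMap 0 (1/2) p.2))
  · intro j
    exact measurable_schurApprox j (fun k => fun p : X × ℝ => b k p.1)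
      (fun k => (hb k).comp measurable_fst)
      (fun p : X × ℝ => circleMap 0 (1/2) p.2)
      ((continuous_circleMap 0 (1/2)).measurable.comp measurable_snd)
  · rw [tendsto_pi_nhds]
    intro p
    obtain ⟨g, hg0, hgt⟩ := hG p.1
    set z := circleMap 0 (1/2) p.2 with hzdef
    have hzabs : ‖z‖ ≤ 1/2 := by
      rw [hzdef]
      have := norm_circleMap_zero (1/2) p.2
      rw [this, _root_.abs_of_nonneg (by norm_num : (0:ℝ) ≤ 1/2)]
    have hbnd := fun j => tower_approx hgt hzabs j
    rw [← hg0]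
    rw [tendsto_iff_dist_tendsto_zero]
    have hb2 : ∀ j : ℕ, dist (schurApprox j (fun k => b k p.1) z) (g 0 z) ≤ 2 * (2/3)^j := by
      intro j
      rw [Complex.dist_eq]
      calc ‖schurApprox j (fun k => b k p.1) z - g 0 z‖
          = ‖-(g 0 z - schurApprox j (fun k => b k p.1) z)‖ := by ring_nf
      _ = ‖g 0 z - schurApprox j (fun k => b k p.1) z‖ := norm_neg _
      _ ≤ 2 * (2/3)^j := hbnd j
    have h23 : |(2/3 : ℝ)| < 1 := by rw [abs_of_pos (by norm_num)]; norm_num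
    have hlim := (tendsto_pow_atTop_nhds_zero_of_abs_lt_one h23).const_mul (2:ℝ)
    rw [mul_zero] at hlim
    exact squeeze_zero (fun j => dist_nonneg) hb2 hlim

/-- Measurability of the Taylor coefficients. -/
lemma measurable_coef (hb : ∀ k, Measurable (b k))
    (hG : ∀ x, ∃ g : ℕ → ℂ → ℂ, g 0 = G x ∧ IsTower g (fun k => b k x)) (n : ℕ) :
    Measurable (fun x => coef (G x) n) := by
  have hcirc := measurable_circle_values hb hG
  have hhalf : ((1/2 : ℝ≥0) : ℝ) = (1/2 : ℝ) := by norm_num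
  simp only [coef, cauchyPowerSeries, ContinuousMultilinearMap.mkPiRing_apply,
    Finset.prod_const_one, one_smul, circleIntegral, hhalf, smul_eq_mul, one_mul]
  have h2π : (0:ℝ) ≤ 2 * Real.pi := by positivity
  have hrw : ∀ x : X, (∫ t in (0:ℝ)..(2*Real.pi), deriv (circleMap 0 (1/2)) t *
        ((circleMap 0 (1/2) t - 0)⁻¹ ^ n * ((circleMap 0 (1/2) t - 0)⁻¹ * G x (circleMap 0 (1/2) t))))
      = ∫ t, deriv (circleMap 0 (1/2)) t *
        ((circleMap 0 (1/2) t - 0)⁻¹ ^ n * ((circleMap 0 (1/2) t - 0)⁻¹ * G x (circleMap 0 (1/2) t)))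
          ∂(volume.restrict (Ioc (0:ℝ) (2*Real.pi))) := by
    intro x
    rw [intervalIntegral.integral_of_le h2π]
  simp only [hrw]
  have hmeasF : StronglyMeasurable (fun p : X × ℝ => deriv (circleMap 0 (1/2)) p.2 *
      ((circleMap 0 (1/2) p.2 - 0)⁻¹ ^ n * ((circleMap 0 (1/2) p.2 - 0)⁻¹ * G p.1 (circleMap 0 (1/2) p.2)))) := by
    apply Measurable.stronglyMeasurable
    have hm1 : Measurable (fun p : X × ℝ => deriv (circleMap 0 (1/2)) p.2) := by
      simp only [deriv_circleMap]
      exact (((continuous_circleMap 0 (1/2)).measurable.comp measurable_snd).mul measurable_const)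
    have hm2 : Measurable (fun p : X × ℝ => (circleMap 0 (1/2) p.2 - 0)⁻¹) :=
      (((continuous_circleMap 0 (1/2)).measurable.comp measurable_snd).sub measurable_const).inv
    exact hm1.mul ((hm2.pow measurable_const).mul (hm2.mul hcirc))
  exact ((StronglyMeasurable.integral_prod_right'
    (ν := volume.restrict (Ioc (0:ℝ) (2*Real.pi))) hmeasF).measurable).const_mul _

/-- Joint measurability of radial evaluations of a measurably-parametrized
Schur function on the whole unit disc. -/
lemma measurable_eval (hb : ∀ k, Measurable (b k))
    (hG : ∀ x, ∃ g : ℕ → ℂ → ℂ, g 0 = G x ∧ IsTower g (fun k => b k x)) :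
    Measurable (fun p : X × (ℝ × ℝ) =>
      if |p.2.1| < 1 then G p.1 ((p.2.1 : ℂ) * Complex.exp (p.2.2 * Complex.I)) else 0) := by
  classical
  have hset : MeasurableSet {p : X × (ℝ × ℝ) | |p.2.1| < 1} := by
    have hm : Measurable (fun p : X × (ℝ × ℝ) => |p.2.1|) :=
      (measurable_fst.comp measurable_snd).abs
    exact measurableSet_lt hm measurable_const
  have hzm : Measurable (fun p : X × (ℝ × ℝ) => ((p.2.1 : ℝ) : ℂ) * Complex.exp (p.2.2 * Complex.I)) := by
    apply Measurable.mul
    · exact Complex.measurable_ofReal.comp (measurable_fst.comp measurable_snd)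
    · exact Complex.continuous_exp.measurable.comp
        ((Complex.measurable_ofReal.comp (measurable_snd.comp measurable_snd)).mul measurable_const)
  apply measurable_of_tendsto_metrizable
    (f := fun N (p : X × (ℝ × ℝ)) => if |p.2.1| < 1 then
      ∑ n ∈ Finset.range N, ((p.2.1 : ℂ) * Complex.exp (p.2.2 * Complex.I)) ^ n • coef (G p.1) n
      else 0)
  · intro N
    apply Measurable.ite hset _ measurable_const
    apply Finset.measurable_sum
    intro n _
    exact (hzm.pow_const n).smul ((measurable_coef hb hG n).comp measurable_fst)
  · rw [tendsto_pi_nhds]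
    intro p
    by_cases h : |p.2.1| < 1
    · simp only [if_pos h]
      obtain ⟨g, hg0, hgt⟩ := hG p.1
      have hd : DifferentiableOn ℂ (G p.1) (ball (0:ℂ) 1) := by
        rw [← hg0]; exact (hgt.1 0).1
      have hz : ((p.2.1 : ℝ) : ℂ) * Complex.exp (p.2.2 * Complex.I) ∈ ball (0:ℂ) 1 := by
        simp only [mem_ball, Complex.dist_eq, sub_zero, norm_mul, Complex.norm_real, Real.norm_eq_abs,
          Complex.norm_exp_ofReal_mul_I, mul_one]
        exact h
      exact (schur_hasSum hd hz).tendsto_sum_nat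
    · simp only [if_neg h]
      exact tendsto_const_nhds

end Meas
/-- One step of the Schur algorithm determines `h` from `h₁` via the Möbius map. -/
lemma rec_moeb {h h₁ : ℂ → ℂ} (hb₁ : ∀ z ∈ ball (0:ℂ) 1, ‖h₁ z‖ ≤ 1) {a : ℂ}
    (ha : ‖a‖ < 1)
    (hrec : ∀ z ∈ ball (0:ℂ) 1,
      z * h₁ z * (1 - (starRingEnd ℂ) a * h z) = h z - a)
    {z : ℂ} (hz : z ∈ ball (0:ℂ) 1) : h z = moeb a (z * h₁ z) := by
  have hz1 : ‖z‖ < 1 := by simpa [Complex.dist_eq] using hz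
  have hbb : ‖z * h₁ z‖ ≤ ‖z‖ := by
    rw [norm_mul]
    calc ‖z‖ * ‖h₁ z‖ ≤ ‖z‖ * 1 :=
      mul_le_mul_of_nonneg_left (hb₁ z hz) (norm_nonneg z)
    _ = ‖z‖ := mul_one _
  have hlt : ‖a‖ * ‖z * h₁ z‖ < 1 := by
    have h0 := norm_nonneg a
    have h0' := norm_nonneg (z * h₁ z)
    nlinarith
  have hne := moeb_denom_ne hlt
  rw [moeb, eq_div_iff hne]
  have hr := hrec z hz
  have : h z * (1 + (starRingEnd ℂ) a * (z * h₁ z))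
      = (h z - a) - z * h₁ z * (1 - (starRingEnd ℂ) a * h z) + (a + z * h₁ z) := by ring
  rw [this, hr]
  ring

/-- Invariance of the good radial boundary set under one step of the Schur algorithm. -/
lemma radial_transfer {h h₁ : ℂ → ℂ} (hh : IsSchur' h) (hh₁ : IsSchur' h₁) {a : ℂ}
    (ha : ‖a‖ < 1)
    (hrec : ∀ z ∈ ball (0:ℂ) 1,
      z * h₁ z * (1 - (starRingEnd ℂ) a * h z) = h z - a) (θ : ℝ) :
    (∃ L, Tendsto (fun r : ℝ => h ((r:ℂ) * Complex.exp (θ * Complex.I)))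
        (nhdsWithin (1:ℝ) (Set.Iio (1:ℝ))) (𝓝 L) ∧ ‖L‖ < 1) ↔
    (∃ L, Tendsto (fun r : ℝ => h₁ ((r:ℂ) * Complex.exp (θ * Complex.I)))
        (nhdsWithin (1:ℝ) (Set.Iio (1:ℝ))) (𝓝 L) ∧ ‖L‖ < 1) := by
  set e : ℂ := Complex.exp (θ * Complex.I) with he_def
  have habse : ‖e‖ = 1 := by
    rw [he_def]
    exact_mod_cast Complex.norm_exp_ofReal_mul_I θ
  have he0 : e ≠ 0 := by
    intro h0; rw [h0] at habse; simp at habse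
  have hmem : ∀ r : ℝ, r ∈ Ioo (1/2 : ℝ) 1 → ((r:ℂ) * e) ∈ ball (0:ℂ) 1 := by
    intro r hr
    simp only [mem_ball, Complex.dist_eq, sub_zero, norm_mul, Complex.norm_real, Real.norm_eq_abs, habse, mul_one]
    rw [_root_.abs_of_pos (by linarith [hr.1] : (0:ℝ) < r)]
    exact hr.2
  have hIoo : Ioo (1/2 : ℝ) 1 ∈ nhdsWithin (1:ℝ) (Set.Iio (1:ℝ)) :=
    Ioo_mem_nhdsLT_of_mem (by norm_num)
  have hrto1 : Tendsto (fun r : ℝ => ((r:ℂ))) (nhdsWithin (1:ℝ) (Set.Iio (1:ℝ))) (𝓝 1) := by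
    have : Tendsto (fun r : ℝ => ((r:ℂ))) (𝓝 (1:ℝ)) (𝓝 1) := by
      exact_mod_cast Complex.continuous_ofReal.tendsto 1
    exact this.mono_left nhdsWithin_le_nhds
  constructor
  · rintro ⟨L, hL, hLlt⟩
    have hDne : (1 : ℂ) - (starRingEnd ℂ) a * L ≠ 0 := by
      have h1 : ‖-a‖ * ‖L‖ < 1 := by
        rw [norm_neg]
        nlinarith [norm_nonneg a, norm_nonneg L]
      have h2 := moeb_denom_ne h1
      simpa [map_neg, neg_mul, ← sub_eq_add_neg] using h2
    refine ⟨(L - a) / (e * (1 - (starRingEnd ℂ) a * L)), ?_, ?_⟩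
    · have heq : ∀ᶠ (r : ℝ) in nhdsWithin (1:ℝ) (Set.Iio (1:ℝ)),
          h₁ ((r:ℂ) * e) = (h ((r:ℂ) * e) - a) /
            (((r:ℂ) * e) * (1 - (starRingEnd ℂ) a * h ((r:ℂ) * e))) := by
        filter_upwards [hIoo] with r hr
        have hz := hmem r hr
        have hDz : (1 : ℂ) - (starRingEnd ℂ) a * h ((r:ℂ) * e) ≠ 0 := by
          have hb := hh.2 _ hz
          have h1 : ‖-a‖ * ‖h ((r:ℂ)*e)‖ < 1 := by
            rw [norm_neg]
            nlinarith [norm_nonneg a, norm_nonneg (h ((r:ℂ)*e))]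
          have h2 := moeb_denom_ne h1
          simpa [map_neg, neg_mul, ← sub_eq_add_neg] using h2
        have hz0 : ((r:ℂ) * e) ≠ 0 := by
          apply mul_ne_zero _ he0
          have hr0 : r ≠ 0 := (by linarith [hr.1] : (0:ℝ) < r).ne'
          exact_mod_cast hr0
        rw [eq_div_iff (mul_ne_zero hz0 hDz)]
        have := hrec _ hz
        linear_combination this
      rw [tendsto_congr' heq]
      apply Tendsto.div
      · exact hL.sub_const a
      · have h1 : Tendsto (fun r : ℝ => ((r:ℂ) * e)) (nhdsWithin (1:ℝ) (Set.Iio (1:ℝ))) (𝓝 e) := by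
          have := hrto1.mul_const e
          simpa using this
        have h2 : Tendsto (fun r : ℝ => (1 : ℂ) - (starRingEnd ℂ) a * h ((r:ℂ)*e))
            (nhdsWithin (1:ℝ) (Set.Iio (1:ℝ))) (𝓝 (1 - (starRingEnd ℂ) a * L)) := by
          exact (tendsto_const_nhds.sub (tendsto_const_nhds.mul hL))
        exact h1.mul h2
      · exact mul_ne_zero he0 hDne
    · rw [norm_div, norm_mul, habse, one_mul]
      have hnum : ‖L - a‖ < ‖1 - (starRingEnd ℂ) a * L‖ := by
        have h1 := moeb_num_lt_denom (a := -a) (u := L) (by rwa [norm_neg]) hLlt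
        simpa [map_neg, neg_mul, ← sub_eq_add_neg, neg_add_eq_sub] using h1
      have hpos : 0 < ‖1 - (starRingEnd ℂ) a * L‖ := by
        have h1 : ‖-a‖ * ‖L‖ < 1 := by
          rw [norm_neg]
          nlinarith [norm_nonneg a, norm_nonneg L]
        have h2 := moeb_denom_pos h1
        simpa [map_neg, neg_mul, ← sub_eq_add_neg] using h2
      rw [div_lt_one hpos]
      exact hnum
  · rintro ⟨L₁, hL₁, hL₁lt⟩
    set u₀ : ℂ := e * L₁ with hu₀
    have hu₀abs : ‖u₀‖ < 1 := by
      rw [hu₀, norm_mul, habse, one_mul]; exact hL₁lt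
    refine ⟨moeb a u₀, ?_, moeb_abs_lt_one ha hu₀abs⟩
    have heq : ∀ᶠ (r : ℝ) in nhdsWithin (1:ℝ) (Set.Iio (1:ℝ)),
        h ((r:ℂ) * e) = moeb a (((r:ℂ) * e) * h₁ ((r:ℂ) * e)) := by
      filter_upwards [hIoo] with r hr
      exact rec_moeb hh₁.2 ha hrec (hmem r hr)
    rw [tendsto_congr' heq]
    have hu : Tendsto (fun r : ℝ => ((r:ℂ) * e) * h₁ ((r:ℂ)*e))
        (nhdsWithin (1:ℝ) (Set.Iio (1:ℝ))) (𝓝 u₀) := by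
      have h1 : Tendsto (fun r : ℝ => ((r:ℂ) * e)) (nhdsWithin (1:ℝ) (Set.Iio (1:ℝ))) (𝓝 e) := by
        have := hrto1.mul_const e
        simpa using this
      have := h1.mul hL₁
      rwa [hu₀]
    have hden : (1 : ℂ) + (starRingEnd ℂ) a * u₀ ≠ 0 := by
      apply moeb_denom_ne
      nlinarith [norm_nonneg a, norm_nonneg u₀]
    have hcont : ContinuousAt (fun u : ℂ => moeb a u) u₀ := by
      simp only [moeb]
      exact ContinuousAt.div (continuousAt_const.add continuousAt_id)
        (continuousAt_const.add (continuousAt_const.mul continuousAt_id)) hden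
    exact (hcont.tendsto).comp hu
/-- Countable (rational) criterion for existence of a radial limit of modulus `< 1`. -/
def RadCond (F : ℝ → ℂ) : Prop :=
  ∃ q : ℚ, (q:ℝ) < 1 ∧ ∀ ε : ℚ, 0 < ε → ∃ s : ℚ, (1/2 : ℝ) ≤ (s:ℝ) ∧ (s:ℝ) < 1 ∧
    ∀ u v : ℚ, (s:ℝ) ≤ (u:ℝ) → (u:ℝ) < 1 → (s:ℝ) ≤ (v:ℝ) → (v:ℝ) < 1 →
      ‖F u - F v‖ ≤ (ε:ℝ) ∧ ‖F u‖ ≤ (q:ℝ) + (ε:ℝ)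

/-- Rational-to-real upgrade of the `RadCond` bounds, by continuity. -/
lemma radCond_real {F : ℝ → ℂ} (hF : ∀ r : ℝ, r ∈ Ioo (0:ℝ) 1 → ContinuousAt F r)
    {q ε : ℚ} {s : ℚ} (hs : (1/2 : ℝ) ≤ (s:ℝ)) (hs1 : (s:ℝ) < 1)
    (hb : ∀ u v : ℚ, (s:ℝ) ≤ (u:ℝ) → (u:ℝ) < 1 → (s:ℝ) ≤ (v:ℝ) → (v:ℝ) < 1 →
      ‖F u - F v‖ ≤ (ε:ℝ) ∧ ‖F u‖ ≤ (q:ℝ) + (ε:ℝ)) :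
    ∀ u v : ℝ, (s:ℝ) ≤ u → u < 1 → (s:ℝ) ≤ v → v < 1 →
      ‖F u - F v‖ ≤ (ε:ℝ) ∧ ‖F u‖ ≤ (q:ℝ) + (ε:ℝ) := by
  -- rational approximation from the right
  have happrox : ∀ u : ℝ, (s:ℝ) ≤ u → u < 1 → ∃ w : ℕ → ℚ,
      (∀ n, (s:ℝ) ≤ (w n : ℝ) ∧ ((w n : ℝ) < 1)) ∧
      Tendsto (fun n => ((w n : ℝ))) atTop (𝓝 u) := by
    intro u hsu hu1
    have hsel : ∀ n : ℕ, ∃ w : ℚ, u < (w:ℝ) ∧ (w:ℝ) < min 1 (u + 1/(n+1)) := by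
      intro n
      apply exists_rat_btwn
      apply lt_min hu1
      have : (0:ℝ) < 1/(n+1) := by positivity
      linarith
    choose w hw1 hw2 using hsel
    refine ⟨w, fun n => ⟨le_trans hsu (hw1 n).le, lt_of_lt_of_le (hw2 n) (min_le_left _ _)⟩, ?_⟩
    have hub : ∀ n : ℕ, (w n : ℝ) ≤ u + 1/(n+1) :=
      fun n => le_trans (hw2 n).le (min_le_right _ _)
    have hlow : ∀ n : ℕ, u ≤ (w n : ℝ) := fun n => (hw1 n).le
    have htend : Tendsto (fun n : ℕ => u + 1/((n:ℝ)+1)) atTop (𝓝 u) := by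
      have := tendsto_one_div_add_atTop_nhds_zero_nat (𝕜 := ℝ)
      have h2 := this.const_add u
      simpa using h2
    exact tendsto_of_tendsto_of_tendsto_of_le_of_le (tendsto_const_nhds) htend hlow hub
  intro u v hsu hu1 hsv hv1
  obtain ⟨w, hwmem, hwt⟩ := happrox u hsu hu1
  obtain ⟨w', hwmem', hwt'⟩ := happrox v hsv hv1
  have hcu : ContinuousAt F u := hF u ⟨by linarith, hu1⟩
  have hcv : ContinuousAt F v := hF v ⟨by linarith, hv1⟩
  have hFu : Tendsto (fun n => F (w n)) atTop (𝓝 (F u)) := (hcu.tendsto).comp hwt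
  have hFv : Tendsto (fun n => F (w' n)) atTop (𝓝 (F v)) := (hcv.tendsto).comp hwt'
  constructor
  · have habs : Tendsto (fun n => ‖F (w n) - F (w' n)‖) atTop
        (𝓝 (‖F u - F v‖)) :=
      (continuous_norm.tendsto _).comp (hFu.sub hFv)
    apply le_of_tendsto habs
    filter_upwards with n
    exact (hb (w n) (w' n) (hwmem n).1 (hwmem n).2 (hwmem' n).1 (hwmem' n).2).1
  · have habs : Tendsto (fun n => ‖F (w n)‖) atTop
        (𝓝 (‖F u‖)) :=
      (continuous_norm.tendsto _).comp hFu
    apply le_of_tendsto habs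
    filter_upwards with n
    exact (hb (w n) (w n) (hwmem n).1 (hwmem n).2 (hwmem n).1 (hwmem n).2).2

lemma radCond_iff {F : ℝ → ℂ} (hF : ∀ r : ℝ, r ∈ Ioo (0:ℝ) 1 → ContinuousAt F r) :
    (∃ L, Tendsto F (nhdsWithin (1:ℝ) (Set.Iio (1:ℝ))) (𝓝 L) ∧ ‖L‖ < 1)
      ↔ RadCond F := by
  constructor
  · rintro ⟨L, hT, hL⟩
    obtain ⟨q, hq1, hq2⟩ := exists_rat_btwn hL
    refine ⟨q, hq2, ?_⟩
    intro ε hε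
    have hδpos : (0:ℝ) < min ((ε:ℝ)/2) ((q:ℝ) - ‖L‖) := by
      apply lt_min
      · have : (0:ℝ) < (ε:ℝ) := by exact_mod_cast hε
        linarith
      · linarith
    set δ := min ((ε:ℝ)/2) ((q:ℝ) - ‖L‖) with hδ
    have hev : ∀ᶠ (r : ℝ) in nhdsWithin (1:ℝ) (Set.Iio (1:ℝ)),
        dist (F r) L ≤ δ := by
      have hmem := hT (Metric.closedBall_mem_nhds L hδpos)
      exact hmem
    obtain ⟨a', ha'1, ha'sub⟩ := (nhdsLT_basis_of_exists_lt ⟨0, by norm_num⟩).mem_iff.mp hev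
    obtain ⟨s, hs1, hs2⟩ := exists_rat_btwn (show max a' (1/2 : ℝ) < 1 by
      apply max_lt ha'1; norm_num)
    refine ⟨s, ?_, hs2, ?_⟩
    · exact le_trans (le_max_right _ _) hs1.le
    intro u v hsu hu1 hsv hv1
    have hu' : (u:ℝ) ∈ Ioo a' 1 := ⟨lt_of_le_of_lt (le_max_left a' _) (lt_of_lt_of_le hs1 hsu), hu1⟩
    have hv' : (v:ℝ) ∈ Ioo a' 1 := ⟨lt_of_le_of_lt (le_max_left a' _) (lt_of_lt_of_le hs1 hsv), hv1⟩
    have hdu := ha'sub hu'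
    have hdv := ha'sub hv'
    simp only [mem_setOf_eq, Complex.dist_eq] at hdu hdv
    constructor
    · calc ‖F u - F v‖ = ‖(F u - L) - (F v - L)‖ := by ring_nf
      _ ≤ ‖F u - L‖ + ‖F v - L‖ := by
          have := norm_sub_le (F ↑u - L) (F ↑v - L)
          exact this
      _ ≤ δ + δ := add_le_add hdu hdv
      _ ≤ (ε:ℝ)/2 + (ε:ℝ)/2 := add_le_add (min_le_left _ _) (min_le_left _ _)
      _ = (ε:ℝ) := by ring
    · calc ‖F u‖ = ‖(F u - L) + L‖ := by ring_nf
      _ ≤ ‖F u - L‖ + ‖L‖ := norm_add_le _ _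
      _ ≤ δ + ‖L‖ := by linarith
      _ ≤ ((q:ℝ) - ‖L‖) + ‖L‖ := by
          have := min_le_right ((ε:ℝ)/2) ((q:ℝ) - ‖L‖)
          linarith
      _ = (q:ℝ) := by ring
      _ ≤ (q:ℝ) + (ε:ℝ) := by
          have : (0:ℝ) < (ε:ℝ) := by exact_mod_cast hε
          linarith
  · rintro ⟨q, hq1, hcond⟩
    -- real-valued bounds
    have hreal : ∀ ε : ℚ, 0 < ε → ∃ s : ℚ, (1/2:ℝ) ≤ (s:ℝ) ∧ (s:ℝ) < 1 ∧
        ∀ u v : ℝ, (s:ℝ) ≤ u → u < 1 → (s:ℝ) ≤ v → v < 1 →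
        ‖F u - F v‖ ≤ (ε:ℝ) ∧ ‖F u‖ ≤ (q:ℝ) + (ε:ℝ) := by
      intro ε hε
      obtain ⟨s, hs1, hs2, hb⟩ := hcond ε hε
      exact ⟨s, hs1, hs2, radCond_real hF hs1 hs2 hb⟩
    -- Cauchy
    have hcauchy : Cauchy (Filter.map F (nhdsWithin (1:ℝ) (Set.Iio (1:ℝ)))) := by
      rw [Metric.cauchy_iff]
      constructor
      · exact Filter.NeBot.map inferInstance F
      · intro ζ hζ
        obtain ⟨ε, hε0, hεζ⟩ := exists_rat_btwn (show (0:ℝ) < ζ/2 by linarith)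
        have hε0' : 0 < ε := by exact_mod_cast hε0
        obtain ⟨s, hs1, hs2, hb⟩ := hreal ε hε0'
        refine ⟨F '' (Ioo (s:ℝ) 1), ?_, ?_⟩
        · exact image_mem_map (Ioo_mem_nhdsLT_of_mem ⟨hs2, le_refl _⟩)
        · rintro x ⟨u, hu, rfl⟩ y ⟨v, hv, rfl⟩
          rw [Complex.dist_eq]
          calc ‖F u - F v‖ ≤ (ε:ℝ) :=
            (hb u v hu.1.le hu.2 hv.1.le hv.2).1
          _ < ζ := by linarith
    obtain ⟨L, hLle⟩ := CompleteSpace.complete hcauchy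
    have hT : Tendsto F (nhdsWithin (1:ℝ) (Set.Iio (1:ℝ))) (𝓝 L) := hLle
    refine ⟨L, hT, ?_⟩
    have hLq : ‖L‖ ≤ (q:ℝ) := by
      by_contra hcon
      push_neg at hcon
      obtain ⟨ε, hε0, hεlt⟩ := exists_rat_btwn (show (0:ℝ) < ‖L‖ - (q:ℝ) by linarith)
      have hε0' : 0 < ε := by exact_mod_cast hε0
      obtain ⟨s, hs1, hs2, hb⟩ := hreal ε hε0'
      have habs : Tendsto (fun r => ‖F r‖) (nhdsWithin (1:ℝ) (Set.Iio (1:ℝ)))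
          (𝓝 (‖L‖)) := (continuous_norm.tendsto _).comp hT
      have hub : ∀ᶠ (r : ℝ) in nhdsWithin (1:ℝ) (Set.Iio (1:ℝ)),
          ‖F r‖ ≤ (q:ℝ) + (ε:ℝ) := by
        filter_upwards [Ioo_mem_nhdsLT_of_mem (⟨hs2, le_refl (1:ℝ)⟩ : (1:ℝ) ∈ Ioc (s:ℝ) 1)]
          with r hr
        exact (hb r r hr.1.le hr.2 hr.1.le hr.2).2
      have := le_of_tendsto habs hub
      linarith
    linarith
section RadSet

variable {X : Type} [mX : MeasurableSpace X]

lemma mset_const_and {c : Prop} {P : X × ℝ → Prop} (h : MeasurableSet {x | P x}) :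
    MeasurableSet {x | c ∧ P x} := by
  by_cases hc : c
  · simp only [hc, true_and]; exact h
  · simp only [hc, false_and, setOf_false]; exact MeasurableSet.empty

lemma mset_const_imp {c : Prop} {P : X × ℝ → Prop} (h : MeasurableSet {x | P x}) :
    MeasurableSet {x | c → P x} := by
  by_cases hc : c
  · simp only [hc, true_implies]; exact h
  · simp only [hc, false_implies, setOf_true]; exact MeasurableSet.univ

variable {G : X → ℂ → ℂ} {b : ℕ → X → ℂ}

/-- The essential-support set, described via the rational criterion, is product-measurable. -/
lemma measurable_radSet (hb : ∀ k, Measurable (b k))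
    (hG : ∀ x, ∃ g : ℕ → ℂ → ℂ, g 0 = G x ∧ IsTower g (fun k => b k x)) :
    MeasurableSet {p : X × ℝ | p.2 ∈ Ico (0:ℝ) (2*Real.pi) ∧
      RadCond (fun r : ℝ => G p.1 ((r:ℂ) * Complex.exp (p.2 * Complex.I)))} := by
  classical
  have hEv := measurable_eval hb hG
  set Ev : ℚ → X × ℝ → ℂ := fun u p =>
    if |(u:ℝ)| < 1 then G p.1 (((u:ℝ):ℂ) * Complex.exp (p.2 * Complex.I)) else 0 with hEvdef
  have hEvm : ∀ u : ℚ, Measurable (Ev u) := by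
    intro u
    have hcomp : Measurable (fun p : X × ℝ => (p.1, ((u:ℝ), p.2))) :=
      measurable_fst.prodMk (measurable_const.prodMk measurable_snd)
    exact hEv.comp hcomp
  have hIco : MeasurableSet {p : X × ℝ | p.2 ∈ Ico (0:ℝ) (2*Real.pi)} :=
    measurable_snd measurableSet_Ico
  have hsplit : {p : X × ℝ | p.2 ∈ Ico (0:ℝ) (2*Real.pi) ∧
      RadCond (fun r : ℝ => G p.1 ((r:ℂ) * Complex.exp (p.2 * Complex.I)))}
      = {p : X × ℝ | p.2 ∈ Ico (0:ℝ) (2*Real.pi)} ∩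
        {p : X × ℝ | RadCond (fun r : ℝ => G p.1 ((r:ℂ) * Complex.exp (p.2 * Complex.I)))} := rfl
  rw [hsplit]
  apply hIco.inter
  have hEvF : ∀ (p : X × ℝ) (u : ℚ), (0:ℝ) ≤ (u:ℝ) → (u:ℝ) < 1 →
      Ev u p = G p.1 (((u:ℝ):ℂ) * Complex.exp (p.2 * Complex.I)) := by
    intro p u h0 h1
    rw [hEvdef]
    simp only
    rw [if_pos (by rwa [_root_.abs_of_nonneg h0])]
  have hseteq : {p : X × ℝ | RadCond (fun r : ℝ => G p.1 ((r:ℂ) * Complex.exp (p.2 * Complex.I)))}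
      = ⋃ q : ℚ, ⋂ ε : ℚ, ⋃ s : ℚ, ⋂ u : ℚ, ⋂ v : ℚ,
        {p : X × ℝ | (q:ℝ) < 1 ∧ (0 < ε → ((1/2:ℝ) ≤ (s:ℝ) ∧ (s:ℝ) < 1 ∧
          ((s:ℝ) ≤ (u:ℝ) → (u:ℝ) < 1 → (s:ℝ) ≤ (v:ℝ) → (v:ℝ) < 1 →
            ‖Ev u p - Ev v p‖ ≤ (ε:ℝ) ∧
              ‖Ev u p‖ ≤ (q:ℝ) + (ε:ℝ))))} := by
    ext p
    simp only [mem_iUnion, mem_iInter, mem_setOf_eq]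
    constructor
    · rintro ⟨q, hq1, h2⟩
      refine ⟨q, fun ε => ?_⟩
      by_cases hε : 0 < ε
      · obtain ⟨s, hs1, hs2, hbnd⟩ := h2 ε hε
        refine ⟨s, fun u v => ⟨hq1, fun _ => ⟨hs1, hs2, fun h1 h2' h3 h4 => ?_⟩⟩⟩
        have e1 := hEvF p u (le_trans (by linarith) h1) h2'
        have e2 := hEvF p v (le_trans (by linarith) h3) h4
        rw [e1, e2]
        exact hbnd u v h1 h2' h3 h4
      · exact ⟨0, fun u v => ⟨hq1, fun h => absurd h hε⟩⟩
    · rintro ⟨q, H⟩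
      have hq1 : (q:ℝ) < 1 := by
        obtain ⟨s, hs⟩ := H 1
        exact (hs 0 0).1
      refine ⟨q, hq1, fun ε hε => ?_⟩
      obtain ⟨s, hs⟩ := H ε
      have hCD := (hs 0 0).2 hε
      refine ⟨s, hCD.1, hCD.2.1, fun u v h1 h2' h3 h4 => ?_⟩
      have hb' := ((hs u v).2 hε).2.2 h1 h2' h3 h4
      have e1 := hEvF p u (le_trans (by linarith [hCD.1]) h1) h2'
      have e2 := hEvF p v (le_trans (by linarith [hCD.1]) h3) h4
      rw [e1, e2] at hb'
      exact hb'
  rw [hseteq]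
  apply MeasurableSet.iUnion; intro q
  apply MeasurableSet.iInter; intro ε
  apply MeasurableSet.iUnion; intro s
  apply MeasurableSet.iInter; intro u
  apply MeasurableSet.iInter; intro v
  apply mset_const_and
  apply mset_const_imp
  apply mset_const_and
  apply mset_const_and
  apply mset_const_imp
  apply mset_const_imp
  apply mset_const_imp
  apply mset_const_imp
  have hm1 : Measurable (fun p : X × ℝ => ‖Ev u p - Ev v p‖) :=
    continuous_norm.measurable.comp ((hEvm u).sub (hEvm v))
  have hm2 : Measurable (fun p : X × ℝ => ‖Ev u p‖) :=
    continuous_norm.measurable.comp (hEvm u)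
  exact (measurableSet_le hm1 measurable_const).inter (measurableSet_le hm2 measurable_const)

/-- The radial-limit description agrees with the rational criterion description. -/
lemma radSet_eq (hG : ∀ x, ∃ g : ℕ → ℂ → ℂ, g 0 = G x ∧ IsTower g (fun k => b k x)) :
    {p : X × ℝ | p.2 ∈ Ico (0:ℝ) (2*Real.pi) ∧
      ∃ L, Tendsto (fun r : ℝ => G p.1 ((r:ℂ) * Complex.exp (p.2 * Complex.I)))
        (nhdsWithin (1:ℝ) (Set.Iio (1:ℝ))) (𝓝 L) ∧ ‖L‖ < 1}
    = {p : X × ℝ | p.2 ∈ Ico (0:ℝ) (2*Real.pi) ∧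
      RadCond (fun r : ℝ => G p.1 ((r:ℂ) * Complex.exp (p.2 * Complex.I)))} := by
  ext p
  simp only [mem_setOf_eq]
  apply and_congr_right
  intro _
  apply radCond_iff
  intro r hr
  obtain ⟨g, hg0, hgt⟩ := hG p.1
  have hd : DifferentiableOn ℂ (G p.1) (ball (0:ℂ) 1) := by
    rw [← hg0]; exact (hgt.1 0).1
  have hz : ((r:ℝ):ℂ) * Complex.exp (p.2 * Complex.I) ∈ ball (0:ℂ) 1 := by
    simp only [mem_ball, Complex.dist_eq, sub_zero, norm_mul, Complex.norm_real, Real.norm_eq_abs,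
      Complex.norm_exp_ofReal_mul_I, mul_one]
    rw [_root_.abs_of_nonneg hr.1.le]
    exact hr.2
  have hc1 : ContinuousAt (fun r : ℝ => ((r:ℂ) * Complex.exp (p.2 * Complex.I))) r :=
    (Complex.continuous_ofReal.mul continuous_const).continuousAt
  have hc2 : ContinuousAt (G p.1) (((r:ℝ):ℂ) * Complex.exp (p.2 * Complex.I)) :=
    (hd.continuousOn).continuousAt (isOpen_ball.mem_nhds hz)
  show ContinuousAt ((G p.1) ∘ (fun r : ℝ => ((r:ℂ) * Complex.exp (p.2 * Complex.I)))) r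
  exact ContinuousAt.comp hc2 hc1

end RadSet
lemma prodSigma_mono {α γ : Type*} {m m' : MeasurableSpace α} {mγ : MeasurableSpace γ}
    (h : m ≤ m') : (@Prod.instMeasurableSpace α γ m mγ) ≤ (@Prod.instMeasurableSpace α γ m' mγ) := by
  show m.comap Prod.fst ⊔ mγ.comap Prod.snd ≤ m'.comap Prod.fst ⊔ mγ.comap Prod.snd
  exact sup_le_sup (MeasurableSpace.comap_mono h) le_rfl

theorem statement13
    {Ω : Type} [MeasureSpace Ω] [IsProbabilityMeasure (volume : Measure Ω)]
    (β : ℕ → Ω → ℂ) (hmeas : ∀ n, Measurable (β n))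
    (hD : ∀ n ω, ‖β n ω‖ < 1)
    (hindep : ProbabilityTheory.iIndepFun β (volume : Measure Ω))
    (f : Ω → ℂ → ℂ)
    (hf : ∀ ω, HasSchurParams (f ω) (fun n => β n ω)) :
    ∃ A : Set ℝ, MeasurableSet A ∧
      ∀ᵐ ω : Ω, (volume : Measure ℝ)
        (symmDiff {θ : ℝ | θ ∈ Set.Ico 0 (2 * Real.pi) ∧
          ∃ L : ℂ, RadialLimit (f ω) (Complex.exp (θ * Complex.I)) L ∧ ‖L‖ < 1}
          A) = 0 := by
  classical
  set gg : Ω → ℕ → ℂ → ℂ := fun ω => Classical.choose (hf ω) with hggdef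
  have hspec : ∀ ω, (gg ω) 0 = f ω ∧ (∀ n, IsSchur (gg ω n)) ∧ (∀ n, gg ω n 0 = β n ω) ∧
      ∀ n, ‖β n ω‖ < 1 → ∀ z ∈ ball (0:ℂ) 1,
        z * gg ω (n+1) z * (1 - (starRingEnd ℂ) (β n ω) * gg ω n z) = gg ω n z - β n ω :=
    fun ω => Classical.choose_spec (hf ω)
  have htower : ∀ ω m, IsTower (fun k => gg ω (k + m)) (fun k => β (k + m) ω) := by
    intro ω m
    refine ⟨fun n => ⟨((hspec ω).2.1 (n+m)).1, ((hspec ω).2.1 (n+m)).2⟩,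
      fun n => hD _ _, fun n z hz => ?_⟩
    have := (hspec ω).2.2.2 (n+m) (hD _ _) z hz
    simpa [Nat.add_right_comm n 1 m] using this
  have hG : ∀ m : ℕ, ∀ ω : Ω, ∃ g, g 0 = gg ω m ∧ IsTower g (fun k => β (k + m) ω) := by
    intro m ω
    exact ⟨fun k => gg ω (k+m), by simp, htower ω m⟩
  -- σ-algebras
  set σs : ℕ → MeasurableSpace Ω := fun n => MeasurableSpace.comap (β n) inferInstance with hσs
  set Mσ : ℕ → MeasurableSpace Ω := fun m => ⨆ (k : ℕ) (_ : k ≥ m), σs k with hMσ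
  have hMle : ∀ m, Mσ m ≤ (inferInstance : MeasurableSpace Ω) := by
    intro m
    simp only [hMσ]
    exact iSup₂_le fun k _ => (hmeas k).comap_le
  have hb : ∀ m k, Measurable[Mσ m] (fun ω => β (k + m) ω) := by
    intro m k
    rw [measurable_iff_comap_le]
    have : σs (k + m) ≤ Mσ m := le_iSup₂ (f := fun (k : ℕ) (_ : k ≥ m) => σs k)
      (k+m) (Nat.le_add_left m k)
    exact this
  -- the good boundary sets in the product space
  set Dset : ℕ → Set (Ω × ℝ) := fun m => {p : Ω × ℝ | p.2 ∈ Ico (0:ℝ) (2*Real.pi) ∧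
      ∃ L, Tendsto (fun r : ℝ => gg p.1 m ((r:ℂ) * Complex.exp (p.2 * Complex.I)))
        (nhdsWithin (1:ℝ) (Set.Iio (1:ℝ))) (𝓝 L) ∧ ‖L‖ < 1} with hDset
  have hDmeas : ∀ m, MeasurableSet[@Prod.instMeasurableSpace Ω ℝ (Mσ m) _] (Dset m) := by
    intro m
    have h1 := @radSet_eq Ω (Mσ m) (fun ω => gg ω m) (fun k ω => β (k+m) ω) (hG m)
    have h2 := @measurable_radSet Ω (Mσ m) (fun ω => gg ω m) (fun k ω => β (k+m) ω)
      (hb m) (hG m)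
    have h3 : Dset m = {p : Ω × ℝ | p.2 ∈ Ico (0:ℝ) (2*Real.pi) ∧
        RadCond (fun r : ℝ => gg p.1 m ((r:ℂ) * Complex.exp (p.2 * Complex.I)))} := h1
    rw [h3]
    exact h2
  have hDeq : ∀ m, Dset m = Dset 0 := by
    intro m
    induction m with
    | zero => rfl
    | succ m ih =>
      rw [← ih]
      ext p
      simp only [hDset, mem_setOf_eq]
      apply and_congr_right
      intro _
      have hrec : ∀ z ∈ ball (0:ℂ) 1,
          z * gg p.1 (m+1) z * (1 - (starRingEnd ℂ) (β m p.1) * gg p.1 m z)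
            = gg p.1 m z - β m p.1 :=
        fun z hz => (hspec p.1).2.2.2 m (hD m p.1) z hz
      have hS1 : IsSchur' (gg p.1 m) :=
        ⟨((hspec p.1).2.1 m).1, ((hspec p.1).2.1 m).2⟩
      have hS2 : IsSchur' (gg p.1 (m+1)) :=
        ⟨((hspec p.1).2.1 (m+1)).1, ((hspec p.1).2.1 (m+1)).2⟩
      exact (radial_transfer hS1 hS2 (hD m p.1) hrec p.2).symm
  -- tail-measurable occupation quantities
  set Xab : ℚ → ℚ → Ω → ℝ≥0∞ := fun a b ω =>
    volume (Prod.mk ω ⁻¹' (Dset 0 ∩ (univ ×ˢ Ioo ((a:ℝ)) ((b:ℝ))))) with hXab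
  have hXmeas : ∀ (a b : ℚ) (m : ℕ), Measurable[Mσ m] (Xab a b) := by
    intro a b m
    have hs : MeasurableSet[@Prod.instMeasurableSpace Ω ℝ (Mσ m) _]
        (Dset 0 ∩ (univ ×ˢ Ioo ((a:ℝ)) ((b:ℝ)))) := by
      rw [← hDeq m]
      exact (hDmeas m).inter (MeasurableSet.prod MeasurableSet.univ measurableSet_Ioo)
    exact @measurable_measure_prodMk_left Ω ℝ (Mσ m) _ volume _ _ hs
  set E : ℚ × ℚ × ℚ → Set Ω := fun c =>
    {ω | Xab c.1 c.2.1 ω ≤ ((Real.toNNReal c.2.2 : ℝ≥0) : ℝ≥0∞)} with hE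
  have htail : ∀ c, MeasurableSet[limsup σs atTop] (E c) := by
    intro c
    rw [limsup_eq_iInf_iSup_of_nat, MeasurableSpace.measurableSet_iInf]
    intro m
    show MeasurableSet[Mσ m] (E c)
    exact (hXmeas c.1 c.2.1 m) measurableSet_Iic
  have h01 : ∀ c, volume (E c) = 0 ∨ volume (E c) = 1 := by
    intro c
    exact ProbabilityTheory.measure_zero_or_one_of_measurableSet_limsup_atTop
      (fun n => (hmeas n).comap_le) hindep (htail c)
  have hEmeasAmb : ∀ c, MeasurableSet (E c) :=
    fun c => hMle 0 _ ((hXmeas c.1 c.2.1 0) measurableSet_Iic)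
  set Ec : ℚ × ℚ × ℚ → Set Ω := fun c => if volume (E c) = 1 then E c else (E c)ᶜ with hEc
  have hEcMeas : ∀ c, MeasurableSet (Ec c) := by
    intro c
    simp only [hEc]
    split_ifs
    · exact hEmeasAmb c
    · exact (hEmeasAmb c).compl
  have hEc1 : ∀ c, volume (Ec c) = 1 := by
    intro c
    simp only [hEc]
    split_ifs with h
    · exact h
    · have h0 : volume (E c) = 0 := (h01 c).resolve_right h
      rw [measure_compl (hEmeasAmb c) (measure_ne_top _ _), h0, measure_univ, tsub_zero]
  set Gset : Set Ω := ⋂ c : ℚ × ℚ × ℚ, Ec c with hGset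
  have hGc0 : volume Gsetᶜ = 0 := by
    rw [hGset, compl_iInter]
    apply measure_iUnion_null
    intro c
    rw [measure_compl (hEcMeas c) (measure_ne_top _ _), hEc1 c, measure_univ, tsub_self]
  have hGne : Gset.Nonempty := by
    apply nonempty_of_measure_ne_zero (μ := (volume : Measure Ω))
    intro h0
    have h1 : (1:ℝ≥0∞) = volume (univ : Set Ω) := measure_univ.symm
    have h2 : volume (univ : Set Ω) ≤ volume Gset + volume Gsetᶜ := by
      rw [← union_compl_self Gset]
      exact measure_union_le _ _
    rw [h0, hGc0, add_zero] at h2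
    rw [← h1] at h2
    simp at h2
  obtain ⟨ω₀, hω₀⟩ := hGne
  -- the deterministic set
  set Ssec : Ω → Set ℝ := fun ω => Prod.mk ω ⁻¹' Dset 0 with hSsec
  have hDamb : MeasurableSet (Dset 0) := prodSigma_mono (hMle 0) _ (hDmeas 0)
  have hSmeas : ∀ ω, MeasurableSet (Ssec ω) := fun ω => measurable_prodMk_left hDamb
  have hSsub : ∀ ω, Ssec ω ⊆ Ico (0:ℝ) (2*Real.pi) := by
    intro ω θ hθ
    exact hθ.1
  refine ⟨Ssec ω₀, hSmeas ω₀, ?_⟩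
  rw [MeasureTheory.ae_iff]
  apply measure_mono_null _ hGc0
  intro ω hω
  simp only [mem_setOf_eq] at hω
  simp only [mem_compl_iff]
  intro hωG
  apply hω
  -- identify the theorem's set with the section
  have hsect : {θ : ℝ | θ ∈ Set.Ico 0 (2 * Real.pi) ∧
      ∃ L : ℂ, RadialLimit (f ω) (Complex.exp (θ * Complex.I)) L ∧ ‖L‖ < 1}
      = Ssec ω := by
    ext θ
    simp only [hSsec]
    simp only [mem_preimage, hDset, mem_setOf_eq]
    rw [show gg ω 0 = f ω from (hspec ω).1]
    exact Iff.rfl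
  rw [hsect]
  -- equality of occupation measures
  have hXeq : ∀ a b : ℚ, Xab a b ω = Xab a b ω₀ := by
    intro a b
    have hiff : ∀ t : ℚ, (Xab a b ω ≤ ((Real.toNNReal t : ℝ≥0) : ℝ≥0∞)
        ↔ Xab a b ω₀ ≤ ((Real.toNNReal t : ℝ≥0) : ℝ≥0∞)) := by
      intro t
      have h1 : ω ∈ Ec (a, b, t) := mem_iInter.1 hωG (a, b, t)
      have h2 : ω₀ ∈ Ec (a, b, t) := mem_iInter.1 hω₀ (a, b, t)
      simp only [hEc] at h1 h2
      by_cases h : volume (E (a, b, t)) = 1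
      · rw [if_pos h] at h1 h2
        simp only [hE] at h1 h2
        simp only [mem_setOf_eq] at h1 h2
        exact iff_of_true h1 h2
      · rw [if_neg h] at h1 h2
        simp only [hE] at h1 h2
        simp only [mem_compl_iff, mem_setOf_eq] at h1 h2
        exact iff_of_false h1 h2
    by_contra hne
    rcases lt_or_gt_of_ne hne with hlt | hgt
    · obtain ⟨t, _, hxt, hty⟩ := ENNReal.lt_iff_exists_rat_btwn.1 hlt
      exact absurd ((hiff t).1 hxt.le) (not_le.2 hty)
    · obtain ⟨t, _, hxt, hty⟩ := ENNReal.lt_iff_exists_rat_btwn.1 hgt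
      exact absurd ((hiff t).2 hxt.le) (not_le.2 hty)
  -- restricted measures agree
  have hXsec : ∀ (a b : ℚ) (ω' : Ω),
      Xab a b ω' = volume (Ioo ((a:ℝ)) ((b:ℝ)) ∩ Ssec ω') := by
    intro a b ω'
    simp only [hXab]
    congr 1
    ext θ
    simp only [mem_preimage, mem_inter_iff, mem_prod, mem_univ, true_and, hSsec]
    tauto
  haveI hfin : ∀ ω' : Ω, IsFiniteMeasure ((volume : Measure ℝ).restrict (Ssec ω')) := by
    intro ω'
    constructor
    rw [Measure.restrict_apply_univ]
    exact (measure_mono (hSsub ω')).trans_lt measure_Ico_lt_top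
  have hrestr : (volume : Measure ℝ).restrict (Ssec ω) = (volume : Measure ℝ).restrict (Ssec ω₀) := by
    apply MeasureTheory.ext_of_generate_finite _
      ((BorelSpace.measurable_eq).trans Real.borel_eq_generateFrom_Ioo_rat)
      Real.isPiSystem_Ioo_rat
    · rintro s hs
      simp only [mem_iUnion, mem_singleton_iff] at hs
      obtain ⟨a, b, _, rfl⟩ := hs
      rw [Measure.restrict_apply measurableSet_Ioo, Measure.restrict_apply measurableSet_Ioo]
      rw [← hXsec a b ω, ← hXsec a b ω₀]
      exact hXeq a b
    · rw [Measure.restrict_apply_univ, Measure.restrict_apply_univ]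
      have hpi : 2 * Real.pi < 7 := by
        have := Real.pi_lt_d2
        linarith
      have hsub7 : ∀ ω' : Ω, Ssec ω' ∩ Ioo (((-1:ℚ):ℝ)) (((7:ℚ):ℝ)) = Ssec ω' := by
        intro ω'
        apply inter_eq_left.2
        intro θ hθ
        have := hSsub ω' hθ
        simp only [mem_Ico] at this
        simp only [mem_Ioo]
        push_cast
        constructor <;> linarith [Real.pi_pos]
      calc volume (Ssec ω) = volume (Ssec ω ∩ Ioo (((-1:ℚ):ℝ)) (((7:ℚ):ℝ))) := by
            rw [hsub7 ω]
      _ = volume (Ioo (((-1:ℚ):ℝ)) (((7:ℚ):ℝ)) ∩ Ssec ω) := by rw [inter_comm]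
      _ = Xab (-1) 7 ω := (hXsec (-1) 7 ω).symm
      _ = Xab (-1) 7 ω₀ := hXeq (-1) 7
      _ = volume (Ioo (((-1:ℚ):ℝ)) (((7:ℚ):ℝ)) ∩ Ssec ω₀) := hXsec (-1) 7 ω₀
      _ = volume (Ssec ω₀ ∩ Ioo (((-1:ℚ):ℝ)) (((7:ℚ):ℝ))) := by rw [inter_comm]
      _ = volume (Ssec ω₀) := by rw [hsub7 ω₀]
  -- conclude: the symmetric difference is null
  have hnull1 : volume (Ssec ω \ Ssec ω₀) = 0 := by
    have h1 : volume (Ssec ω \ Ssec ω₀) = (volume.restrict (Ssec ω)) (Ssec ω₀)ᶜ := by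
      rw [Measure.restrict_apply (hSmeas ω₀).compl, diff_eq, inter_comm]
    rw [h1, hrestr, Measure.restrict_apply (hSmeas ω₀).compl]
    simp
  have hnull2 : volume (Ssec ω₀ \ Ssec ω) = 0 := by
    have h1 : volume (Ssec ω₀ \ Ssec ω) = (volume.restrict (Ssec ω₀)) (Ssec ω)ᶜ := by
      rw [Measure.restrict_apply (hSmeas ω).compl, diff_eq, inter_comm]
    rw [h1, ← hrestr, Measure.restrict_apply (hSmeas ω).compl]
    simp
  have : symmDiff (Ssec ω) (Ssec ω₀) = (Ssec ω \ Ssec ω₀) ∪ (Ssec ω₀ \ Ssec ω) :=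
    Set.symmDiff_def _ _
  rw [this]
  apply le_antisymm _ zero_le
  calc volume ((Ssec ω \ Ssec ω₀) ∪ (Ssec ω₀ \ Ssec ω))
      ≤ volume (Ssec ω \ Ssec ω₀) + volume (Ssec ω₀ \ Ssec ω) := measure_union_le _ _
  _ = 0 := by rw [hnull1, hnull2, add_zero]

end
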